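/- arXiv:1709.00222 — 5 statements merged into one kernel-verified Lean document; each statement's English description precedes it below -/
import Mathlib

section
/- Let G be a finite group, let E be a finite-dimensional real vector space, and let K be a simplicial complex in E with only finitely many faces, with underlying space |K| (the union of the convex hulls of its faces). Let ρ be an action of G on E by affine automorphisms such that for every g ∈ G the image under ρ(g) of every face of K is again a face of K, the induced action on |K| is free (ρ(g)x ≠ x for every x ∈ |K| and every g ≠ 1), and for every g ≠ 1 and every face s of K the image under ρ(g) of the relative (intrinsic) interior of the convex hull of s is disjoint from that relative interior. Let (μₙ)ₙ∈ℕ be a sequence of finite Borel measures on E. Then there exists a subset U of |K|, open in the subspace topology of |K|, such that ρ(g)(U) ∩ ρ(h)(U) = ∅ whenever g, h ∈ G with g ≠ h, and μₙ(|K| \ ⋃_{g∈G} ρ(g)(U)) = 0 for every n ∈ ℕ. -/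
open MeasureTheory

/-- Let a finite group `G` act by affine automorphisms `ρ` on a
finite-dimensional real normed vector space `E`, mapping faces of a finite simplicial
complex `K` to faces, freely on the underlying space `|K|`, and such that no nontrivial
group element maps a point of the relative interior of (the convex hull of) a face back
into that relative interior.  Then for any sequence `μₙ` of finite Borel measures on `E`
there is a relatively open subset `U ⊆ |K|` whose `G`-translates are pairwise disjoint
and cover `|K|` up to a set which is `μₙ`-null for every `n`. -/
theorem stmt0 {G : Type*} [Group G] [Finite G]
    {E : Type*} [NormedAddCommGroup E] [NormedSpace ℝ E] [FiniteDimensional ℝ E]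
    [MeasurableSpace E] [BorelSpace E] [DecidableEq E]
    (K : Geometry.SimplicialComplex ℝ E) (hKfin : K.faces.Finite)
    (ρ : G →* (E ≃ᵃ[ℝ] E))
    (hfaces : ∀ g : G, ∀ s ∈ K.faces, s.image (ρ g) ∈ K.faces)
    (hfree : ∀ g : G, g ≠ 1 → ∀ x ∈ K.space, ρ g x ≠ x)
    (hint : ∀ g : G, g ≠ 1 → ∀ s ∈ K.faces,
      (ρ g) '' (intrinsicInterior ℝ (convexHull ℝ (s : Set E))) ∩
        intrinsicInterior ℝ (convexHull ℝ (s : Set E)) = ∅)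
    (μ : ℕ → Measure E) (hμ : ∀ n, IsFiniteMeasure (μ n)) :
    ∃ U : Set E, U ⊆ K.space ∧ (∃ V : Set E, IsOpen V ∧ U = V ∩ K.space) ∧
      (∀ g h : G, g ≠ h → (ρ g) '' U ∩ (ρ h) '' U = ∅) ∧
      ∀ n : ℕ, μ n (K.space \ ⋃ g : G, (ρ g) '' U) = 0 := by
  classical
  haveI : ∀ n, IsFiniteMeasure (μ n) := hμ
  -- basic algebraic facts about the action
  have hcomp : ∀ (k m : G) (x : E), ρ k (ρ m x) = ρ (k * m) x := fun k m x => by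
    rw [map_mul]; rfl
  have hone : ∀ x : E, ρ (1 : G) x = x := fun x => by rw [map_one]; rfl
  have hcontg : ∀ g : G, Continuous (ρ g) := fun g =>
    AffineMap.continuous_of_finiteDimensional (ρ g).toAffineMap
  have hcl : IsClosed K.space :=
    hKfin.isClosed_biUnion fun s _ => (s.finite_toSet.isCompact_convexHull ℝ).isClosed
  have hmaps : ∀ (g : G), ∀ x ∈ K.space, ρ g x ∈ K.space := by
    intro g x hx
    rw [Geometry.SimplicialComplex.mem_space_iff] at hx ⊢
    obtain ⟨s, hs, hxs⟩ := hx
    refine ⟨s.image (ρ g), hfaces g s hs, ?_⟩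
    have := AffineMap.image_convexHull (ρ g).toAffineMap (s : Set E)
    rw [Finset.coe_image]
    have hmem : ρ g x ∈ (ρ g).toAffineMap '' convexHull ℝ (s : Set E) :=
      Set.mem_image_of_mem _ hxs
    rw [this] at hmem
    exact hmem
  have hA : ∀ (g h : G), g ≠ h → ∀ x ∈ K.space, ρ g x - ρ h x ≠ 0 := by
    intro g h hgh x hx habs
    have heq : ρ g x = ρ h x := sub_eq_zero.mp habs
    have h2 : ρ (h⁻¹ * g) x = x := by
      rw [← hcomp, heq, hcomp, inv_mul_cancel, hone]
    exact hfree (h⁻¹ * g) (fun e => hgh (inv_mul_eq_one.mp e).symm) x hx h2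
  -- the dual space and its Haar measure
  set D := E →L[ℝ] ℝ with hD
  letI : MeasurableSpace D := borel D
  haveI : BorelSpace D := ⟨rfl⟩
  set mD : Measure D := (Module.finBasis ℝ D).addHaar with hmD
  -- For every n and g ≠ h, almost every ℓ gives a null "tie set".
  have key : ∀ (n : ℕ) (g h : G), g ≠ h →
      mD {ℓ : D | μ n {x | x ∈ K.space ∧ ℓ (ρ g x - ρ h x) = 0} ≠ 0} = 0 := by
    intro n g h hgh
    set S : Set (D × E) := {p | p.2 ∈ K.space ∧ p.1 (ρ g p.2 - ρ h p.2) = 0} with hS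
    have hcontf : Continuous fun p : D × E => p.1 (ρ g p.2 - ρ h p.2) := by
      have h1 : Continuous fun p : D × E => (p.1, ρ g p.2 - ρ h p.2) :=
        continuous_fst.prodMk (((hcontg g).comp continuous_snd).sub
          ((hcontg h).comp continuous_snd))
      exact isBoundedBilinearMap_apply.continuous.comp h1
    have hSmeas : MeasurableSet S := by
      have : S = (Prod.snd ⁻¹' K.space) ∩
          ((fun p : D × E => p.1 (ρ g p.2 - ρ h p.2)) ⁻¹' {0}) := by
        ext p; exact Iff.rfl
      rw [this]
      exact ((hcl.preimage continuous_snd).measurableSet).inter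
        ((isClosed_singleton.preimage hcontf).measurableSet)
    have hsec : ∀ x : E, mD ((fun ℓ : D => (ℓ, x)) ⁻¹' S) = 0 := by
      intro x
      by_cases hx : x ∈ K.space
      · have hv : ρ g x - ρ h x ≠ 0 := hA g h hgh x hx
        have hker : LinearMap.ker (((ContinuousLinearMap.apply ℝ ℝ (ρ g x - ρ h x)) :
            D →L[ℝ] ℝ) : D →ₗ[ℝ] ℝ) ≠ ⊤ := by
          obtain ⟨f, hf⟩ := SeparatingDual.exists_ne_zero (R := ℝ) hv
          intro htop
          have : f ∈ LinearMap.ker (((ContinuousLinearMap.apply ℝ ℝ (ρ g x - ρ h x)) :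
              D →L[ℝ] ℝ) : D →ₗ[ℝ] ℝ) := htop ▸ Submodule.mem_top
          exact hf this
        refine measure_mono_null ?_ (Measure.addHaar_submodule mD _ hker)
        intro ℓ hℓ
        exact hℓ.2
      · have : ((fun ℓ : D => (ℓ, x)) ⁻¹' S) = ∅ := by
          ext ℓ; simp [hS, hx]
        simp [this]
    have hprod : (mD.prod (μ n)) S = 0 := by
      rw [Measure.prod_apply_symm hSmeas]
      simp only [hsec]
      simp
    have hae := (Measure.measure_prod_null hSmeas).mp hprod
    have hpre : ∀ ℓ : D, Prod.mk ℓ ⁻¹' S = {x | x ∈ K.space ∧ ℓ (ρ g x - ρ h x) = 0} :=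
      fun ℓ => rfl
    have h2 := ae_iff.mp hae
    simpa [hpre] using h2
  -- the union of all bad sets of functionals is null
  have hbad : mD (⋃ q : ℕ × G × G,
      {ℓ : D | q.2.1 ≠ q.2.2 ∧
        μ q.1 {x | x ∈ K.space ∧ ℓ (ρ q.2.1 x - ρ q.2.2 x) = 0} ≠ 0}) = 0 := by
    refine measure_iUnion_null fun q => ?_
    rcases eq_or_ne q.2.1 q.2.2 with hq | hq
    · have : {ℓ : D | q.2.1 ≠ q.2.2 ∧
          μ q.1 {x | x ∈ K.space ∧ ℓ (ρ q.2.1 x - ρ q.2.2 x) = 0} ≠ 0} = ∅ := by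
        ext ℓ; simp [hq]
      rw [this]; exact measure_empty
    · exact measure_mono_null (fun ℓ hℓ => hℓ.2) (key q.1 q.2.1 q.2.2 hq)
  -- choose a good functional
  have hne : ∃ ℓ : D, ℓ ∉ ⋃ q : ℕ × G × G,
      {ℓ : D | q.2.1 ≠ q.2.2 ∧
        μ q.1 {x | x ∈ K.space ∧ ℓ (ρ q.2.1 x - ρ q.2.2 x) = 0} ≠ 0} := by
    by_contra hcon
    push_neg at hcon
    have hsub : (Set.univ : Set D) ⊆ _ := fun ℓ _ => hcon ℓ
    have h0 : mD Set.univ = 0 := measure_mono_null hsub hbad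
    have hpos : 0 < mD Set.univ := IsOpen.measure_pos mD isOpen_univ ⟨0, trivial⟩
    exact hpos.ne' h0
  obtain ⟨ℓ, hℓ⟩ := hne
  have hgood : ∀ (n : ℕ) (g h : G), g ≠ h →
      μ n {x | x ∈ K.space ∧ ℓ (ρ g x) = ℓ (ρ h x)} = 0 := by
    intro n g h hgh
    have h1 : ℓ ∉ {ℓ : D | g ≠ h ∧
        μ n {x | x ∈ K.space ∧ ℓ (ρ g x - ρ h x) = 0} ≠ 0} :=
      fun hmem => hℓ (Set.mem_iUnion.mpr ⟨(n, g, h), hmem⟩)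
    simp only [Set.mem_setOf_eq, not_and, not_not] at h1
    have hset : {x | x ∈ K.space ∧ ℓ (ρ g x) = ℓ (ρ h x)} =
        {x | x ∈ K.space ∧ ℓ (ρ g x - ρ h x) = 0} := by
      ext x; simp [map_sub, sub_eq_zero]
    rw [hset]
    exact h1 hgh
  -- the fundamental domain
  set V : Set E := {x | ∀ g : G, g ≠ 1 → ℓ (ρ g x) < ℓ x} with hV
  have hVopen : IsOpen V := by
    have : V = ⋂ g : G, ⋂ _ : g ≠ 1, {x | ℓ (ρ g x) < ℓ x} := by
      ext x; simp [hV]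
    rw [this]
    exact isOpen_iInter_of_finite fun g => isOpen_iInter_of_finite fun hg =>
      isOpen_lt (ℓ.continuous.comp (hcontg g)) ℓ.continuous
  refine ⟨V ∩ K.space, Set.inter_subset_right, ⟨V, hVopen, rfl⟩, ?_, ?_⟩
  · intro g h hgh
    rw [Set.eq_empty_iff_forall_notMem]
    rintro y ⟨⟨a, ⟨haV, haK⟩, rfl⟩, ⟨b, ⟨hbV, hbK⟩, hba⟩⟩
    have hb : ρ (h⁻¹ * g) a = b := by
      rw [← hcomp, ← hba, hcomp, inv_mul_cancel, hone]
    have h1 : ℓ b < ℓ a := by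
      have := haV (h⁻¹ * g) (fun e => hgh (inv_mul_eq_one.mp e).symm)
      rwa [hb] at this
    have ha : ρ (g⁻¹ * h) b = a := by
      rw [← hb, hcomp, ← mul_assoc, mul_assoc g⁻¹ h h⁻¹, mul_inv_cancel, mul_one,
        inv_mul_cancel, hone]
    have h2 : ℓ a < ℓ b := by
      have := hbV (g⁻¹ * h) (fun e => hgh (inv_mul_eq_one.mp e))
      rwa [ha] at this
    exact absurd h2 h1.asymm
  · intro n
    have hTnull : μ n (⋃ g : G, ⋃ h : G, ⋃ _ : g ≠ h,
        {x | x ∈ K.space ∧ ℓ (ρ g x) = ℓ (ρ h x)}) = 0 :=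
      measure_iUnion_null fun g => measure_iUnion_null fun h =>
        measure_iUnion_null fun hgh => hgood n g h hgh
    refine measure_mono_null ?_ hTnull
    rintro x ⟨hxK, hxU⟩
    by_contra hcon
    have hdist : ∀ g h : G, g ≠ h → ℓ (ρ g x) ≠ ℓ (ρ h x) := by
      intro g h hgh heq
      exact hcon (Set.mem_iUnion.mpr ⟨g, Set.mem_iUnion.mpr ⟨h,
        Set.mem_iUnion.mpr ⟨hgh, ⟨hxK, heq⟩⟩⟩⟩)
    obtain ⟨g₀, hg₀⟩ := Finite.exists_max fun g : G => ℓ (ρ g x)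
    apply hxU
    refine Set.mem_iUnion.mpr ⟨g₀⁻¹, ⟨ρ g₀ x, ⟨?_, hmaps g₀ x hxK⟩, ?_⟩⟩
    · intro k hk
      have hle := hg₀ (k * g₀)
      have hne2 : ℓ (ρ (k * g₀) x) ≠ ℓ (ρ g₀ x) :=
        hdist _ _ (fun e => hk (mul_eq_right.mp e))
      have hlt := lt_of_le_of_ne hle hne2
      rw [hcomp]
      exact hlt
    · rw [hcomp, inv_mul_cancel, hone]
end

section
/- Let d ≥ 1 and let Θ = (θⱼₖ) be a skew-symmetric d × d real matrix. Define h_Θ : ℤ^d → 𝕋^d = (ℝ/ℤ)^d by h_Θ(m) = (Σⱼ θ₁ⱼ mⱼ mod 1, …, Σⱼ θ_dⱼ mⱼ mod 1) for m = (m₁,…,m_d) ∈ ℤ^d. Then Θ is nondegenerate if and only if h_Θ has dense range in 𝕋^d. -/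
open Complex Finset Filter Topology
open scoped Real

noncomputable section

namespace Stmt2Aux

variable {d : ℕ}

/-- The character of the `d`-torus indexed by `n : ℤ^d`. -/
def chi (n : Fin d → ℤ) : C((Fin d → AddCircle (1:ℝ)), ℂ) :=
  ⟨fun y => ∏ j, fourier (n j) (y j),
    continuous_finset_prod _ fun j _ =>
      (map_continuous (fourier (n j))).comp (continuous_apply j)⟩

lemma chi_apply (n : Fin d → ℤ) (y : Fin d → AddCircle (1:ℝ)) :
    chi n y = ∏ j, fourier (n j) (y j) := rfl

lemma fourier_pt_add {T : ℝ} (m : ℤ) (a b : AddCircle T) :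
    fourier m (a + b) = fourier m a * fourier m b := by
  simp only [fourier_apply, smul_add, AddCircle.toCircle_add, Circle.coe_mul]

lemma chi_add_pt (n : Fin d → ℤ) (y z : Fin d → AddCircle (1:ℝ)) :
    chi n (y + z) = chi n y * chi n z := by
  simp only [chi_apply, Pi.add_apply, fourier_pt_add, Finset.prod_mul_distrib]

lemma chi_zero : (chi (0 : Fin d → ℤ)) = 1 := by
  ext y
  simp [chi_apply, fourier_zero]

lemma chi_apply_zero (n : Fin d → ℤ) : chi n 0 = 1 := by
  simp [chi_apply, fourier_eval_zero]

lemma chi_mul (a b : Fin d → ℤ) : chi a * chi b = chi (a + b) := by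
  ext y
  simp only [ContinuousMap.mul_apply, chi_apply, ← Finset.prod_mul_distrib, Pi.add_apply,
    fourier_add]

lemma star_chi (n : Fin d → ℤ) : star (chi n) = chi (-n) := by
  ext y
  simp only [ContinuousMap.star_apply, chi_apply, Pi.neg_apply, fourier_neg]
  rw [← map_prod (starRingEnd ℂ)]
  rfl

lemma chi_real (n : Fin d → ℤ) (v : Fin d → ℝ) :
    chi n (fun j => (v j : AddCircle (1:ℝ))) =
      Complex.exp (2 * π * Complex.I * ((∑ j, (n j : ℝ) * v j : ℝ) : ℂ)) := by
  simp only [chi_apply, fourier_coe_apply, div_one, ← Complex.exp_sum]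
  congr 1
  push_cast
  rw [Finset.mul_sum]
  exact Finset.sum_congr rfl fun j _ => by ring

lemma chi_single (j0 : Fin d) (y : Fin d → AddCircle (1:ℝ)) :
    chi (Pi.single j0 1) y = (AddCircle.toCircle (y j0) : ℂ) := by
  rw [chi_apply, Finset.prod_eq_single j0]
  · simp [Pi.single_eq_same, fourier_one]
  · intro i _ hij
    simp [Pi.single_eq_of_ne hij, fourier_zero]
  · simp

lemma norm_exp_two_pi_I_mul (r : ℝ) : ‖Complex.exp (2 * π * Complex.I * (r : ℂ))‖ = 1 := by
  rw [show 2 * (π:ℂ) * Complex.I * (r:ℂ) = ((2 * π * r : ℝ) : ℂ) * Complex.I by push_cast; ring]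
  rw [Complex.norm_exp_ofReal_mul_I]

lemma exp_two_pi_eq_one_iff (r : ℝ) :
    Complex.exp (2 * π * Complex.I * (r : ℂ)) = 1 ↔ ∃ z : ℤ, r = z := by
  rw [Complex.exp_eq_one_iff]
  constructor
  · rintro ⟨z, hz⟩
    refine ⟨z, ?_⟩
    have h2 : (2 * (π:ℂ) * Complex.I : ℂ) ≠ 0 :=
      mul_ne_zero (mul_ne_zero two_ne_zero (by exact_mod_cast Real.pi_ne_zero))
        Complex.I_ne_zero
    have hz' : ((r : ℂ) - (z : ℂ)) * (2 * (π:ℂ) * Complex.I) = 0 := by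
      linear_combination hz
    have : (r : ℂ) = (z : ℂ) := by
      rcases mul_eq_zero.mp hz' with h | h
      · exact sub_eq_zero.mp h
      · exact absurd h h2
    exact_mod_cast this
  · rintro ⟨z, rfl⟩
    exact ⟨z, by push_cast; ring⟩






lemma avg_geom_tendsto (z : ℂ) (hz : ‖z‖ = 1) :
    Tendsto (fun N : ℕ => ((N : ℂ))⁻¹ * ∑ t ∈ Finset.range N, z ^ t) atTop
      (𝓝 (if z = 1 then 1 else 0)) := by
  split_ifs with h1
  · subst h1
    have hev : (fun _ : ℕ => (1 : ℂ)) =ᶠ[atTop]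
        (fun N : ℕ => ((N : ℂ))⁻¹ * ∑ t ∈ Finset.range N, (1:ℂ) ^ t) := by
      filter_upwards [eventually_ge_atTop 1] with N hN
      have hN' : (N : ℂ) ≠ 0 := by
        exact_mod_cast Nat.cast_ne_zero.mpr (by omega : N ≠ 0)
      simp [Finset.sum_const, inv_mul_cancel₀ hN']
    exact tendsto_const_nhds.congr' hev
  · apply squeeze_zero_norm (a := fun N : ℕ => (2 / ‖z - 1‖) * ((N : ℝ))⁻¹)
    · intro N
      rw [norm_mul, geom_sum_eq h1, norm_div]
      have hb : ‖z ^ N - 1‖ ≤ 2 := by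
        calc ‖z ^ N - 1‖ ≤ ‖z ^ N‖ + ‖(1 : ℂ)‖ := norm_sub_le _ _
          _ = 2 := by rw [norm_pow, hz]; norm_num
      have hNn : ‖((N : ℂ))⁻¹‖ = ((N : ℝ))⁻¹ := by
        rw [norm_inv]; norm_num
      rw [hNn, mul_comm]
      have hzpos : 0 < ‖z - 1‖ := norm_pos_iff.mpr (sub_ne_zero.mpr h1)
      gcongr
    · have h0 : Tendsto (fun N : ℕ => ((N : ℝ))⁻¹) atTop (𝓝 0) :=
        tendsto_inv_atTop_zero.comp tendsto_natCast_atTop_atTop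
      simpa using h0.const_mul (2 / ‖z - 1‖)

variable {d : ℕ}

lemma mem_span_chi {g : C((Fin d → AddCircle (1:ℝ)), ℂ)}
    (hg : g ∈ StarAlgebra.adjoin ℂ (Set.range (chi (d := d)))) :
    g ∈ Submodule.span ℂ (Set.range (chi (d := d))) := by
  set M := Submodule.span ℂ (Set.range (chi (d := d))) with hM
  have hgen : ∀ n : Fin d → ℤ, chi n ∈ M := fun n => Submodule.subset_span ⟨n, rfl⟩
  have h1 : (1 : C((Fin d → AddCircle (1:ℝ)), ℂ)) ∈ M := by
    rw [← chi_zero]; exact hgen 0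
  have hmulgen : ∀ (n : Fin d → ℤ), ∀ b ∈ M, chi n * b ∈ M := by
    intro n b hb
    induction hb using Submodule.span_induction with
    | mem x hx =>
      obtain ⟨m, rfl⟩ := hx
      rw [chi_mul]; exact hgen _
    | zero => simpa using M.zero_mem
    | add x y hx hy ihx ihy => rw [mul_add]; exact M.add_mem ihx ihy
    | smul a x hx ihx => rw [mul_smul_comm]; exact M.smul_mem a ihx
  have hmul : ∀ a ∈ M, ∀ b ∈ M, a * b ∈ M := by
    intro a ha b hb
    induction ha using Submodule.span_induction with
    | mem x hx => obtain ⟨m, rfl⟩ := hx; exact hmulgen m b hb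
    | zero => simpa using M.zero_mem
    | add x y hx hy ihx ihy => rw [add_mul]; exact M.add_mem ihx ihy
    | smul a x hx ihx => rw [smul_mul_assoc]; exact M.smul_mem a ihx
  have hstar : ∀ a ∈ M, star a ∈ M := by
    intro a ha
    induction ha using Submodule.span_induction with
    | mem x hx => obtain ⟨m, rfl⟩ := hx; rw [star_chi]; exact hgen _
    | zero => simpa using M.zero_mem
    | add x y hx hy ihx ihy => rw [star_add]; exact M.add_mem ihx ihy
    | smul a x hx ihx => rw [star_smul]; exact M.smul_mem _ ihx
  induction hg using StarAlgebra.adjoin_induction with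
  | mem x hx => obtain ⟨m, rfl⟩ := hx; exact hgen _
  | algebraMap r => rw [Algebra.algebraMap_eq_smul_one]; exact M.smul_mem r h1
  | add x y hx hy ihx ihy => exact M.add_mem ihx ihy
  | mul x y hx hy ihx ihy => exact hmul _ ihx _ ihy
  | star x hx ihx => exact hstar _ ihx

end Stmt2Aux
/-- For a skew-symmetric real `d × d` matrix `Θ` (`d ≥ 1`), the map
`h_Θ : ℤ^d → (ℝ/ℤ)^d`, `h_Θ(m)_j = Σ_k Θ_{jk} m_k mod 1`, has dense range if and only if
`Θ` is nondegenerate, i.e. the only `n ∈ ℤ^d` with `Σ_k n_k Θ_{kj} ∈ ℤ` for all `j` is `n = 0`. -/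
theorem stmt2 (d : ℕ) (hd : 1 ≤ d) (Θ : Matrix (Fin d) (Fin d) ℝ)
    (hskew : Θ.transpose = -Θ) :
    (∀ n : Fin d → ℤ, (∀ j : Fin d, ∃ z : ℤ, (∑ k, (n k : ℝ) * Θ k j) = (z : ℝ)) → n = 0) ↔
      DenseRange (fun m : Fin d → ℤ => fun j : Fin d =>
        ((∑ k, Θ j k * (m k : ℝ) : ℝ) : AddCircle (1 : ℝ))) := by
  classical
  haveI : Fact ((0:ℝ) < 1) := ⟨one_pos⟩
  set hfun : (Fin d → ℤ) → (Fin d → AddCircle (1:ℝ)) :=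
    fun m => fun j => ((∑ k, Θ j k * (m k : ℝ) : ℝ) : AddCircle (1 : ℝ)) with hfun_def
  have hrearr : ∀ (n : Fin d → ℤ) (m : Fin d → ℝ),
      (∑ j, (n j : ℝ) * ∑ k, Θ j k * m k) = ∑ k, (∑ j, (n j : ℝ) * Θ j k) * m k := by
    intro n m
    simp_rw [Finset.mul_sum, Finset.sum_mul]
    rw [Finset.sum_comm]
    exact Finset.sum_congr rfl fun k _ => Finset.sum_congr rfl fun j _ => by ring
  constructor
  · intro hnd
    by_contra hdr
    have hfun_zero : hfun 0 = 0 := by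
      funext j
      show ((∑ k, Θ j k * (((0 : Fin d → ℤ) k : ℤ) : ℝ) : ℝ) : AddCircle (1:ℝ)) = 0
      norm_num
    have hfun_add : ∀ a b, hfun (a + b) = hfun a + hfun b := by
      intro a b
      funext j
      show ((∑ k, Θ j k * ((a k + b k : ℤ) : ℝ) : ℝ) : AddCircle (1:ℝ)) = _
      rw [show (∑ k, Θ j k * ((a k + b k : ℤ) : ℝ))
          = (∑ k, Θ j k * (a k : ℝ)) + ∑ k, Θ j k * (b k : ℝ) by
        rw [← Finset.sum_add_distrib]
        exact Finset.sum_congr rfl fun k _ => by push_cast; ring]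
      rfl
    obtain ⟨x, hx⟩ : ∃ x, x ∉ closure (Set.range hfun) := by
      by_contra h
      push_neg at h
      exact hdr h
    set Hhom : (Fin d → ℤ) →+ (Fin d → AddCircle (1:ℝ)) :=
      { toFun := hfun, map_zero' := hfun_zero, map_add' := hfun_add } with hHhom
    set S : AddSubgroup (Fin d → AddCircle (1:ℝ)) := Hhom.range.topologicalClosure with hS
    have hS_carrier : (S : Set (Fin d → AddCircle (1:ℝ))) = closure (Set.range hfun) := by
      have h1 : (Hhom.range : Set (Fin d → AddCircle (1:ℝ))) = Set.range hfun := rfl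
      rw [hS, AddSubgroup.topologicalClosure_coe, h1]
    have hSclosed : IsClosed (S : Set (Fin d → AddCircle (1:ℝ))) :=
      AddSubgroup.isClosed_topologicalClosure _
    have hxS : x ∉ (S : Set (Fin d → AddCircle (1:ℝ))) := by rw [hS_carrier]; exact hx
    have hBclosed : IsClosed ((fun y => x + y) '' (S : Set (Fin d → AddCircle (1:ℝ)))) :=
      (Homeomorph.addLeft x).isClosedMap _ hSclosed
    have hdisj : Disjoint ((fun y => x + y) '' (S : Set (Fin d → AddCircle (1:ℝ))))
        (S : Set (Fin d → AddCircle (1:ℝ))) := by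
      rw [Set.disjoint_left]
      rintro _ ⟨s', hs', rfl⟩ hxs
      refine hxS ?_
      have := S.sub_mem hxs hs'
      simpa using this
    obtain ⟨f, hf0, hf1, -⟩ :=
      exists_continuous_zero_one_of_isClosed hBclosed hSclosed hdisj
    set F : C((Fin d → AddCircle (1:ℝ)), ℂ) :=
      ⟨fun y => ((f y : ℝ) : ℂ), Complex.continuous_ofReal.comp f.continuous⟩ with hF
    set A := StarAlgebra.adjoin ℂ (Set.range (Stmt2Aux.chi (d := d))) with hA
    have hsep : A.SeparatesPoints := by
      intro y z hyz
      obtain ⟨j0, hj0⟩ := Function.ne_iff.mp hyz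
      refine ⟨_, ⟨Stmt2Aux.chi (Pi.single j0 1),
        StarAlgebra.subset_adjoin ℂ _ ⟨_, rfl⟩, rfl⟩, ?_⟩
      show (Stmt2Aux.chi (Pi.single j0 1)) y ≠ (Stmt2Aux.chi (Pi.single j0 1)) z
      rw [Stmt2Aux.chi_single, Stmt2Aux.chi_single]
      intro h
      exact hj0 (AddCircle.injective_toCircle one_ne_zero (Subtype.coe_injective h))
    have hdense :=
      ContinuousMap.starSubalgebra_topologicalClosure_eq_top_of_separatesPoints A hsep
    obtain ⟨g, hgA, hgF⟩ : ∃ g ∈ A, ‖F - g‖ < 1/3 := by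
      have hFcl : F ∈ closure (A : Set C((Fin d → AddCircle (1:ℝ)), ℂ)) := by
        have hmem : F ∈ A.topologicalClosure := by rw [hdense]; trivial
        exact hmem
      rw [Metric.mem_closure_iff] at hFcl
      obtain ⟨g, hgA, hge⟩ := hFcl (1/3) (by norm_num)
      exact ⟨g, hgA, by rw [← dist_eq_norm]; exact hge⟩
    have hgpt : ∀ y, ‖g y - F y‖ ≤ 1/3 := by
      intro y
      have h := ContinuousMap.norm_coe_le_norm (F - g) y
      calc ‖g y - F y‖ = ‖F y - g y‖ := norm_sub_rev _ _
        _ ≤ ‖F - g‖ := by simpa using h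
        _ ≤ 1/3 := le_of_lt hgF
    obtain ⟨s, c, v, hv⟩ := Submodule.mem_span_set'.mp (Stmt2Aux.mem_span_chi hgA)
    choose ν hν using fun i => (v i).2
    set zf : (Fin d → ℤ) → Fin d → ℂ :=
      fun μ k => Complex.exp (2 * Real.pi * Complex.I * ((∑ j, (μ j : ℝ) * Θ j k : ℝ) : ℂ))
      with hzf
    have hchi_hfun : ∀ (μ : Fin d → ℤ) (N : ℕ) (m : Fin d → Fin N),
        Stmt2Aux.chi μ (hfun (fun k => ((m k : ℕ) : ℤ))) = ∏ k, (zf μ k) ^ (m k : ℕ) := by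
      intro μ N m
      have h1 : hfun (fun k => ((m k : ℕ) : ℤ))
          = fun j => ((∑ k, Θ j k * (((m k : ℕ) : ℤ) : ℝ) : ℝ) : AddCircle (1:ℝ)) := rfl
      rw [h1, Stmt2Aux.chi_real]
      have h2 : ∀ k, (zf μ k) ^ (m k : ℕ)
          = Complex.exp (((m k : ℕ) : ℂ) * (2 * Real.pi * Complex.I
              * ((∑ j, (μ j : ℝ) * Θ j k : ℝ) : ℂ))) := by
        intro k
        rw [hzf, ← Complex.exp_nat_mul]
      simp_rw [h2, ← Complex.exp_sum]
      congr 1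
      rw [hrearr μ (fun k => (((m k : ℕ) : ℤ) : ℝ))]
      push_cast
      rw [Finset.mul_sum]
      exact Finset.sum_congr rfl fun k _ => by ring
    have hsum_box : ∀ (μ : Fin d → ℤ) (N : ℕ),
        (∑ m : Fin d → Fin N, Stmt2Aux.chi μ (hfun (fun k => ((m k : ℕ) : ℤ))))
          = ∏ k, ∑ t ∈ Finset.range N, (zf μ k) ^ t := by
      intro μ N
      simp_rw [hchi_hfun μ N]
      have hps := Finset.prod_univ_sum (fun _ : Fin d => (Finset.univ : Finset (Fin N)))
        (fun k t => (zf μ k) ^ (t : ℕ))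
      rw [Fintype.piFinset_univ] at hps
      rw [← hps]
      exact Finset.prod_congr rfl fun k _ =>
        Fin.sum_univ_eq_sum_range (fun t => (zf μ k) ^ t) N
    set W : ℕ → (Fin d → ℤ) → ℂ := fun N μ =>
      (((N : ℂ)) ^ d)⁻¹ * ∑ m : Fin d → Fin N, Stmt2Aux.chi μ (hfun (fun k => ((m k : ℕ) : ℤ)))
      with hW
    have hWrw : ∀ (μ : Fin d → ℤ) (N : ℕ),
        W N μ = ∏ k, (((N : ℂ))⁻¹ * ∑ t ∈ Finset.range N, (zf μ k) ^ t) := by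
      intro μ N
      rw [hW]
      simp only []
      rw [hsum_box, Finset.prod_mul_distrib]
      congr 1
      rw [Finset.prod_const, Finset.card_univ, Fintype.card_fin, inv_pow]
    have hWlim : ∀ μ : Fin d → ℤ,
        Filter.Tendsto (fun N : ℕ => W N μ) Filter.atTop (nhds (if μ = 0 then 1 else 0)) := by
      intro μ
      simp_rw [hWrw μ]
      by_cases hμ : μ = 0
      · subst hμ
        rw [if_pos rfl]
        have hz1 : ∀ k, zf (0 : Fin d → ℤ) k = 1 := by
          intro k
          rw [hzf]
          norm_num
        have hlim : Filter.Tendsto (fun N : ℕ => ∏ k : Fin d,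
            (((N:ℂ))⁻¹ * ∑ t ∈ Finset.range N, (zf 0 k)^t)) Filter.atTop
            (nhds (∏ _k : Fin d, (1:ℂ))) := by
          refine tendsto_finset_prod _ fun k _ => ?_
          have h := Stmt2Aux.avg_geom_tendsto (zf 0 k) (by rw [hz1 k]; simp)
          rw [if_pos (hz1 k)] at h
          exact h
        simpa using hlim
      · rw [if_neg hμ]
        obtain ⟨k0, hk0⟩ : ∃ k, ¬ ∃ z : ℤ, (∑ j, (μ j : ℝ) * Θ j k) = z := by
          by_contra h
          push_neg at h
          exact hμ (hnd μ (fun j => h j))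
        have hzk0 : zf μ k0 ≠ 1 := by
          intro h
          exact hk0 ((Stmt2Aux.exp_two_pi_eq_one_iff _).mp h)
        have hlim : Filter.Tendsto (fun N : ℕ => ∏ k : Fin d,
            (((N:ℂ))⁻¹ * ∑ t ∈ Finset.range N, (zf μ k)^t)) Filter.atTop
            (nhds (∏ k : Fin d, (if zf μ k = 1 then (1:ℂ) else 0))) :=
          tendsto_finset_prod _ fun k _ =>
            Stmt2Aux.avg_geom_tendsto (zf μ k) (Stmt2Aux.norm_exp_two_pi_I_mul _)
        rw [Finset.prod_eq_zero (Finset.mem_univ k0) (by rw [if_neg hzk0])] at hlim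
        exact hlim
    have hgapply : ∀ y, g y = ∑ i, c i * (Stmt2Aux.chi (ν i)) y := by
      intro y
      rw [← hv]
      rw [ContinuousMap.coe_sum, Finset.sum_apply]
      exact Finset.sum_congr rfl fun i _ => by
        rw [ContinuousMap.coe_smul, Pi.smul_apply, smul_eq_mul, ← hν i]
    have havg : ∀ (N : ℕ) (p : Fin d → AddCircle (1:ℝ)),
        (((N:ℂ))^d)⁻¹ * ∑ m : Fin d → Fin N, g (p + hfun (fun k => ((m k:ℕ):ℤ)))
          = ∑ i, c i * (Stmt2Aux.chi (ν i)) p * W N (ν i) := by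
      intro N p
      have hterm : ∀ m : Fin d → Fin N, g (p + hfun (fun k => ((m k:ℕ):ℤ)))
          = ∑ i, c i * ((Stmt2Aux.chi (ν i)) p * (Stmt2Aux.chi (ν i)) (hfun (fun k => ((m k:ℕ):ℤ)))) := by
        intro m
        rw [hgapply]
        exact Finset.sum_congr rfl fun i _ => by rw [Stmt2Aux.chi_add_pt]
      simp_rw [hterm]
      rw [Finset.sum_comm, Finset.mul_sum]
      refine Finset.sum_congr rfl fun i _ => ?_
      have hpull : (∑ m : Fin d → Fin N,
          c i * ((Stmt2Aux.chi (ν i)) p * (Stmt2Aux.chi (ν i)) (hfun (fun k => ((m k:ℕ):ℤ)))))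
          = (c i * (Stmt2Aux.chi (ν i)) p)
            * ∑ m : Fin d → Fin N, (Stmt2Aux.chi (ν i)) (hfun (fun k => ((m k:ℕ):ℤ))) := by
        rw [Finset.mul_sum]
        exact Finset.sum_congr rfl fun m _ => by ring
      rw [hpull, hW]
      ring
    have hNd : ∀ N : ℕ, 1 ≤ N → ((N:ℂ))^d ≠ 0 := fun N hN =>
      pow_ne_zero _ (by exact_mod_cast (by omega : N ≠ 0))
    have hcard : ∀ N : ℕ, (Fintype.card (Fin d → Fin N)) = N ^ d := by
      intro N; simp
    have hest : ∀ (N : ℕ), 1 ≤ N → ∀ (p : Fin d → AddCircle (1:ℝ)) (val : ℂ),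
        (∀ m : Fin d → Fin N, F (p + hfun (fun k => ((m k:ℕ):ℤ))) = val) →
        ‖(∑ i, c i * (Stmt2Aux.chi (ν i)) p * W N (ν i)) - val‖ ≤ 1/3 := by
      intro N hN p val hval
      rw [← havg N p]
      have hval' : val = (((N:ℂ))^d)⁻¹ * ∑ m : Fin d → Fin N,
          F (p + hfun (fun k => ((m k:ℕ):ℤ))) := by
        simp_rw [hval]
        rw [Finset.sum_const, Finset.card_univ, hcard, nsmul_eq_mul]
        push_cast
        rw [← mul_assoc, inv_mul_cancel₀ (hNd N hN), one_mul]
      rw [hval', ← mul_sub, ← Finset.sum_sub_distrib, norm_mul]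
      have h1 : ‖(((N:ℂ))^d)⁻¹‖ = (((N:ℝ))^d)⁻¹ := by
        rw [norm_inv, norm_pow]
        norm_num
      have h2 : ‖∑ m : Fin d → Fin N, (g (p + hfun (fun k => ((m k:ℕ):ℤ)))
            - F (p + hfun (fun k => ((m k:ℕ):ℤ))))‖ ≤ (N:ℝ)^d * (1/3) := by
        calc ‖∑ m : Fin d → Fin N, (g (p + hfun (fun k => ((m k:ℕ):ℤ)))
              - F (p + hfun (fun k => ((m k:ℕ):ℤ))))‖
            ≤ ∑ m : Fin d → Fin N, ‖g (p + hfun (fun k => ((m k:ℕ):ℤ)))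
              - F (p + hfun (fun k => ((m k:ℕ):ℤ)))‖ := norm_sum_le _ _
          _ ≤ ∑ _m : Fin d → Fin N, (1/3 : ℝ) :=
              Finset.sum_le_sum fun m _ => hgpt _
          _ = (N:ℝ)^d * (1/3) := by
              rw [Finset.sum_const, Finset.card_univ, hcard, nsmul_eq_mul]
              push_cast
              ring
      rw [h1]
      have hpos : (0:ℝ) < (N:ℝ)^d := by
        have : (0:ℝ) < (N:ℝ) := by exact_mod_cast (by omega : 0 < N)
        positivity
      calc (((N:ℝ))^d)⁻¹ * ‖∑ m : Fin d → Fin N, (g (p + hfun (fun k => ((m k:ℕ):ℤ)))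
            - F (p + hfun (fun k => ((m k:ℕ):ℤ))))‖
          ≤ (((N:ℝ))^d)⁻¹ * ((N:ℝ)^d * (1/3)) := by
            gcongr
        _ = 1/3 := by field_simp
    set SA : ℕ → ℂ := fun N => ∑ i, c i * W N (ν i) with hSA
    set SB : ℕ → ℂ := fun N => ∑ i, c i * (Stmt2Aux.chi (ν i)) x * W N (ν i) with hSB
    have hAbound : ∀ N, 1 ≤ N → ‖SA N - 1‖ ≤ 1/3 := by
      intro N hN
      have h0 : ∀ m : Fin d → Fin N,
          F ((0 : Fin d → AddCircle (1:ℝ)) + hfun (fun k => ((m k:ℕ):ℤ))) = 1 := by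
        intro m
        rw [zero_add]
        have hmem : hfun (fun k => ((m k:ℕ):ℤ)) ∈ (S : Set (Fin d → AddCircle (1:ℝ))) := by
          rw [hS_carrier]; exact subset_closure ⟨_, rfl⟩
        have heq := hf1 hmem
        rw [hF]
        simp only [ContinuousMap.coe_mk]
        rw [show f (hfun (fun k => ((m k:ℕ):ℤ))) = 1 from heq]
        norm_num
      have h := hest N hN 0 1 h0
      rw [hSA]
      simp only []
      have : (∑ i, c i * W N (ν i)) = ∑ i, c i * (Stmt2Aux.chi (ν i)) 0 * W N (ν i) := by
        refine Finset.sum_congr rfl fun i _ => ?_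
        rw [Stmt2Aux.chi_apply_zero]
        ring
      rw [this]
      exact h
    have hBbound : ∀ N, 1 ≤ N → ‖SB N‖ ≤ 1/3 := by
      intro N hN
      have h0 : ∀ m : Fin d → Fin N, F (x + hfun (fun k => ((m k:ℕ):ℤ))) = 0 := by
        intro m
        have hmem : x + hfun (fun k => ((m k:ℕ):ℤ))
            ∈ ((fun y => x + y) '' (S : Set (Fin d → AddCircle (1:ℝ)))) := by
          refine ⟨hfun (fun k => ((m k:ℕ):ℤ)), ?_, rfl⟩
          rw [hS_carrier]; exact subset_closure ⟨_, rfl⟩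
        have heq := hf0 hmem
        rw [hF]
        simp only [ContinuousMap.coe_mk]
        rw [show f (x + hfun (fun k => ((m k:ℕ):ℤ))) = 0 from heq]
        norm_num
      have h := hest N hN x 0 h0
      rw [sub_zero] at h
      exact h
    have hDlow : ∀ N, 1 ≤ N → (1:ℝ)/3 ≤ ‖SA N - SB N‖ := by
      intro N hN
      have h1 := hAbound N hN
      have h2 := hBbound N hN
      have key : ‖(1:ℂ)‖ ≤ ‖SA N - SB N‖ + (‖SA N - 1‖ + ‖SB N‖) := by
        calc ‖(1:ℂ)‖ = ‖(SA N - SB N) - ((SA N - 1) - SB N)‖ := by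
              congr 1
              ring
          _ ≤ ‖SA N - SB N‖ + ‖(SA N - 1) - SB N‖ := norm_sub_le _ _
          _ ≤ ‖SA N - SB N‖ + (‖SA N - 1‖ + ‖SB N‖) := by
              gcongr
              exact norm_sub_le _ _
      rw [norm_one] at key
      linarith
    have hlim0 : Filter.Tendsto (fun N => SA N - SB N) Filter.atTop (nhds 0) := by
      have hterm : ∀ N, SA N - SB N
          = ∑ i, (c i * (1 - (Stmt2Aux.chi (ν i)) x)) * W N (ν i) := by
        intro N
        rw [hSA, hSB]
        simp only []
        rw [← Finset.sum_sub_distrib]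
        exact Finset.sum_congr rfl fun i _ => by ring
      simp_rw [hterm]
      have hzero : (0:ℂ) = ∑ i, (c i * (1 - (Stmt2Aux.chi (ν i)) x))
          * (if ν i = 0 then (1:ℂ) else 0) := by
        rw [eq_comm]
        refine Finset.sum_eq_zero fun i _ => ?_
        by_cases h : ν i = 0
        · rw [h, Stmt2Aux.chi_zero]
          simp
        · rw [if_neg h, mul_zero]
      rw [hzero]
      exact tendsto_finset_sum _ fun i _ => (hWlim (ν i)).const_mul _
    have hev : ∀ᶠ N in Filter.atTop, ‖SA N - SB N‖ < 1/3 := by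
      have h2 := hlim0.norm
      rw [norm_zero] at h2
      exact h2.eventually (gt_mem_nhds (by norm_num : (0:ℝ) < 1/3))
    obtain ⟨N, hN1, hN2⟩ := (hev.and (Filter.eventually_ge_atTop 1)).exists
    exact absurd (hDlow N hN2) (not_le.mpr hN1)
  · intro hdr n hn
    by_contra hne
    obtain ⟨j0, hj0⟩ : ∃ j, n j ≠ 0 := by
      by_contra h
      push_neg at h
      exact hne (funext h)
    have hone : ∀ y, Stmt2Aux.chi n y = 1 := by
      intro y
      have hy : y ∈ closure (Set.range hfun) := hdr y
      have hsub : Set.range hfun ⊆ {w | Stmt2Aux.chi n w = 1} := by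
        rintro _ ⟨m, rfl⟩
        have hfm : hfun m = fun j => ((∑ k, Θ j k * (m k : ℝ) : ℝ) : AddCircle (1:ℝ)) := rfl
        rw [Set.mem_setOf_eq, hfm, Stmt2Aux.chi_real, Stmt2Aux.exp_two_pi_eq_one_iff]
        refine ⟨∑ k, (hn k).choose * m k, ?_⟩
        rw [hrearr n (fun k => (m k : ℝ))]
        push_cast
        exact Finset.sum_congr rfl fun k _ =>
          congrArg (· * ((m k : ℤ) : ℝ)) (hn k).choose_spec
      have hcl : IsClosed {w | Stmt2Aux.chi n w = 1} :=
        isClosed_eq (map_continuous _) continuous_const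
      exact hcl.closure_subset_iff.mpr hsub hy
    set t : ℝ := 1 / (2 * (n j0 : ℝ)) with ht
    have hval := hone (fun j => ((if j = j0 then t else 0 : ℝ) : AddCircle (1:ℝ)))
    rw [Stmt2Aux.chi_real] at hval
    have hsum : (∑ j, (n j : ℝ) * (if j = j0 then t else 0)) = 1/2 := by
      rw [Finset.sum_eq_single j0]
      · have hn0 : (n j0 : ℝ) ≠ 0 := Int.cast_ne_zero.mpr hj0
        rw [if_pos rfl, ht]
        field_simp
      · intro i _ hij; simp [hij]
      · simp
    rw [hsum] at hval
    have hbad : Complex.exp (π * Complex.I) = 1 := by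
      rw [← hval]; congr 1; push_cast; ring
    rw [Complex.exp_pi_mul_I] at hbad
    norm_num at hbad
end
end

section
/- Let d ≥ 1, let Θ ∈ M_d(ℝ) be a skew-symmetric nondegenerate matrix, and let m ≥ 1 be an integer. Then the set h_Θ(mℤ^d + (1,1,…,1)) = { h_Θ(m·r + (1,…,1)) : r ∈ ℤ^d } is dense in the torus 𝕋^d = (ℝ/ℤ)^d. -/
open MeasureTheory Set TopologicalSpace

noncomputable section

set_option maxHeartbeats 1000000
set_option synthInstance.maxHeartbeats 1000000

namespace Stmt4Aux

instance : Fact ((0:ℝ) < 1) := ⟨one_pos⟩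

instance : IsProbabilityMeasure (volume : Measure (AddCircle (1:ℝ))) := by
  rw [AddCircle.volume_eq_smul_haarAddCircle]
  simp only [ENNReal.ofReal_one, one_smul]
  infer_instance

instance (d : ℕ) : IsProbabilityMeasure (volume : Measure (Fin d → AddCircle (1:ℝ))) :=
  inferInstance

variable {d : ℕ}

abbrev 𝕋d (d : ℕ) := Fin d → AddCircle (1 : ℝ)

/-- Multi-dimensional character of the torus. -/
def charF (n : Fin d → ℤ) : C(𝕋d d, ℂ) :=
  ⟨fun x => ∏ j, fourier (n j) (x j), by
    apply continuous_finset_prod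
    intro j _
    exact (fourier (n j)).continuous.comp (continuous_apply j)⟩

lemma charF_apply (n : Fin d → ℤ) (x : 𝕋d d) :
    charF n x = ∏ j, fourier (n j) (x j) := rfl

lemma fourier_add_arg {m : ℤ} {x y : AddCircle (1:ℝ)} :
    fourier m (x + y) = fourier m x * fourier m y := by
  simp only [fourier_apply, smul_add, AddCircle.toCircle_add, Circle.coe_mul]

lemma charF_add_arg (n : Fin d → ℤ) (x y : 𝕋d d) :
    charF n (x + y) = charF n x * charF n y := by
  simp only [charF_apply, Pi.add_apply, fourier_add_arg, Finset.prod_mul_distrib]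

lemma charF_zero : charF (0 : Fin d → ℤ) = 1 := by
  ext x
  rw [charF_apply, ContinuousMap.one_apply]
  exact Finset.prod_eq_one (fun j _ => by rw [Pi.zero_apply, fourier_zero])

lemma charF_add_index (n n' : Fin d → ℤ) :
    charF (n + n') = charF n * charF n' := by
  ext x
  simp only [charF_apply, Pi.add_apply, fourier_add, ContinuousMap.mul_apply,
    Finset.prod_mul_distrib]

lemma charF_neg_index (n : Fin d → ℤ) : charF (-n) = star (charF n) := by
  ext x
  simp only [ContinuousMap.star_apply, charF_apply, Pi.neg_apply, fourier_neg]
  rw [show star (∏ j, fourier (n j) (x j))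
      = starRingEnd ℂ (∏ j, fourier (n j) (x j)) from rfl, map_prod]

/-- The star subalgebra of `C(𝕋^d, ℂ)` generated by the characters. -/
def charSubalgebra (d : ℕ) : StarSubalgebra ℂ C(𝕋d d, ℂ) where
  toSubalgebra := Algebra.adjoin ℂ (range (charF (d := d)))
  star_mem' := by
    show Algebra.adjoin ℂ (range (charF (d := d))) ≤
      star (Algebra.adjoin ℂ (range (charF (d := d))))
    refine Algebra.adjoin_le ?_
    rintro - ⟨n, rfl⟩
    refine Algebra.subset_adjoin ⟨-n, ?_⟩
    rw [charF_neg_index]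

lemma charSubalgebra_coe (d : ℕ) :
    Subalgebra.toSubmodule (charSubalgebra d).toSubalgebra
      = Submodule.span ℂ (range (charF (d := d))) := by
  apply Algebra.adjoin_eq_span_of_subset
  refine Subset.trans ?_ Submodule.subset_span
  intro x hx
  refine Submonoid.closure_induction (fun _ => id) ⟨0, ?_⟩ ?_ hx
  · rw [charF_zero]
  · rintro - - - - ⟨a, rfl⟩ ⟨b, rfl⟩
    exact ⟨a + b, charF_add_index a b⟩

lemma charSubalgebra_separatesPoints (d : ℕ) : (charSubalgebra d).SeparatesPoints := by
  intro x y hxy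
  obtain ⟨j, hj⟩ := Function.ne_iff.mp hxy
  refine ⟨_, ⟨charF (Pi.single j 1), Algebra.subset_adjoin ⟨_, rfl⟩, rfl⟩, ?_⟩
  have key : ∀ z : 𝕋d d, charF (Pi.single j 1) z = fourier 1 (z j) := by
    intro z
    rw [charF_apply, Finset.prod_eq_single j]
    · simp
    · intro k _ hk
      simp [Pi.single_apply, hk, fourier_zero]
    · simp
  dsimp only
  rw [key, key, fourier_apply, fourier_apply]
  simp only [one_zsmul]
  intro h
  rw [Circle.coe_inj] at h
  exact hj (AddCircle.injective_toCircle one_ne_zero h)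

lemma span_charF_closure_eq_top (d : ℕ) :
    (Submodule.span ℂ (range (charF (d := d)))).topologicalClosure = ⊤ := by
  rw [← charSubalgebra_coe]
  exact congr_arg (Subalgebra.toSubmodule <| StarSubalgebra.toSubalgebra ·)
    (ContinuousMap.starSubalgebra_topologicalClosure_eq_top_of_separatesPoints _
      (charSubalgebra_separatesPoints d))

/-- Characters integrate to zero against a shift-invariant measure unless trivial. -/
lemma integral_charF_eq_zero {μ : Measure (𝕋d d)} {n : Fin d → ℤ} {h : 𝕋d d}
    (hshift : ∫ x, charF n (x + h) ∂μ = ∫ x, charF n x ∂μ) (hne : charF n h ≠ 1) :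
    ∫ x, charF n x ∂μ = 0 := by
  have key : ∀ x, charF n (x + h) = charF n h * charF n x := by
    intro x; rw [charF_add_arg, mul_comm]
  simp only [key] at hshift
  rw [integral_const_mul] at hshift
  have h0 : (charF n h - 1) * ∫ x, charF n x ∂μ = 0 := by
    rw [sub_mul, one_mul, hshift, sub_self]
  rcases mul_eq_zero.mp h0 with h' | h'
  · exact absurd (sub_eq_zero.mp h') (by simpa using hne)
  · exact h'

lemma integrable_contMap (μ : Measure (𝕋d d)) [IsFiniteMeasure μ] (f : C(𝕋d d, ℂ)) :
    Integrable (fun x => f x) μ :=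
  f.continuous.integrable_of_hasCompactSupport (HasCompactSupport.of_compactSpace _)

lemma integrable_contMapR (μ : Measure (𝕋d d)) [IsFiniteMeasure μ] (f : C(𝕋d d, ℝ)) :
    Integrable (fun x => f x) μ :=
  f.continuous.integrable_of_hasCompactSupport (HasCompactSupport.of_compactSpace _)

/-- Main abstract density criterion on the torus: a subgroup on which no nontrivial
character is identically `1` is dense. -/
theorem dense_of_characters (d : ℕ) (H : AddSubgroup (𝕋d d))
    (hchar : ∀ n : Fin d → ℤ, n ≠ 0 → ∃ h ∈ H, charF n h ≠ 1) :
    Dense (H : Set (𝕋d d)) := by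
  by_contra hden
  set K := H.topologicalClosure with hKdef
  have hKclosed : IsClosed (K : Set (𝕋d d)) := H.isClosed_topologicalClosure
  have hKne : (K : Set (𝕋d d)) ≠ univ := by
    intro hcontra
    apply hden
    rw [← dense_closure (s := (H : Set (𝕋d d)))]
    rw [← AddSubgroup.topologicalClosure_coe, ← hKdef, hcontra]
    exact dense_univ
  obtain ⟨x₀, hx₀⟩ : ∃ x₀, x₀ ∉ (K : Set (𝕋d d)) := by
    by_contra hcontra
    push_neg at hcontra
    exact hKne (eq_univ_of_forall hcontra)
  -- Haar measure on K
  haveI : CompactSpace ↥K := isCompact_iff_compactSpace.mp hKclosed.isCompact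
  haveI : BorelSpace ↥K := Subtype.borelSpace _
  haveI : Nonempty ↥K := ⟨⟨0, K.zero_mem⟩⟩
  haveI : WeaklyLocallyCompactSpace ↥K := inferInstance
  set μK : Measure ↥K := Measure.addHaarMeasure (⊤ : PositiveCompacts ↥K) with hμKdef
  haveI : IsProbabilityMeasure μK := ⟨by
    simpa using Measure.addHaarMeasure_self (K₀ := (⊤ : PositiveCompacts ↥K))⟩
  haveI : μK.IsAddLeftInvariant := Measure.isAddLeftInvariant_addHaarMeasure _
  set μ : Measure (𝕋d d) := Measure.map Subtype.val μK with hμdef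
  haveI : IsProbabilityMeasure μ :=
    Measure.isProbabilityMeasure_map measurable_subtype_coe.aemeasurable
  -- transfer of integrals
  have hInt : ∀ f : C(𝕋d d, ℂ), ∫ x, f x ∂μ = ∫ k : ↥K, f ↑k ∂μK := by
    intro f
    exact integral_map measurable_subtype_coe.aemeasurable
      (f.continuous.aestronglyMeasurable)
  -- shift invariance of μ under elements of K
  have hshift : ∀ (f : C(𝕋d d, ℂ)) (h : 𝕋d d), h ∈ K →
      ∫ x, f (x + h) ∂μ = ∫ x, f x ∂μ := by
    intro f h hh
    have h1 : ∫ x, f (x + h) ∂μ = ∫ k : ↥K, f (↑k + h) ∂μK := by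
      exact integral_map measurable_subtype_coe.aemeasurable
        ((f.continuous.comp (continuous_id.add continuous_const)).aestronglyMeasurable)
    rw [h1, hInt f]
    have h2 := integral_add_left_eq_self (μ := μK) (fun k : ↥K => f ↑k) ⟨h, hh⟩
    calc ∫ k : ↥K, f (↑k + h) ∂μK
        = ∫ k : ↥K, f ↑((⟨h, hh⟩ : ↥K) + k) ∂μK := by
          congr 1; funext k
          congr 1
          show (k : 𝕋d d) + h = (((⟨h, hh⟩ : ↥K) + k : ↥K) : 𝕋d d)
          rw [AddSubgroup.coe_add]
          exact add_comm _ _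
      _ = ∫ k : ↥K, f ↑k ∂μK := h2
  -- characters integrate to 0 against μ
  have hμchar : ∀ n : Fin d → ℤ, n ≠ 0 → ∫ x, charF n x ∂μ = 0 := by
    intro n hn
    obtain ⟨h, hH, hne⟩ := hchar n hn
    exact integral_charF_eq_zero
      (hshift (charF n) h (AddSubgroup.le_topologicalClosure H hH)) hne
  -- characters integrate to 0 against volume
  have hvolchar : ∀ n : Fin d → ℤ, n ≠ 0 →
      ∫ x, charF n x ∂(volume : Measure (𝕋d d)) = 0 := by
    intro n hn
    obtain ⟨j, hj⟩ := Function.ne_iff.mp hn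
    set h : 𝕋d d := Pi.single j ((((1:ℝ) / 2 / (n j : ℝ)) : ℝ) : AddCircle (1:ℝ)) with hhdef
    have hne : charF n h ≠ 1 := by
      have key : charF n h
          = fourier (n j) ((((1:ℝ) / 2 / (n j : ℝ)) : ℝ) : AddCircle (1:ℝ)) := by
        rw [charF_apply, Finset.prod_eq_single j]
        · rw [hhdef]; simp
        · intro k _ hk
          rw [hhdef]
          simp only [Pi.single_apply, if_neg hk]
          exact fourier_eval_zero (n k)
        · simp
      have h2 := fourier_add_half_inv_index (T := 1) hj one_pos 0
      rw [zero_add, fourier_eval_zero] at h2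
      rw [key, h2]
      intro hcontra
      norm_num at hcontra
    refine integral_charF_eq_zero ?_ hne
    have h3 := integral_add_left_eq_self (μ := (volume : Measure (𝕋d d)))
      (fun x => charF n x) h
    calc ∫ x, charF n (x + h) ∂(volume : Measure (𝕋d d))
        = ∫ x, charF n (h + x) ∂(volume : Measure (𝕋d d)) := by
          congr 1; funext x; rw [add_comm]
      _ = ∫ x, charF n x ∂(volume : Measure (𝕋d d)) := h3
  -- equality of integrals on the span of the characters
  have hspan : ∀ f ∈ Submodule.span ℂ (range (charF (d := d))),
      ∫ x, f x ∂μ = ∫ x, f x ∂(volume : Measure (𝕋d d)) := by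
    intro f hf
    induction hf using Submodule.span_induction with
    | mem f hf =>
      obtain ⟨n, rfl⟩ := hf
      by_cases hn : n = 0
      · subst hn
        rw [charF_zero]
        simp
      · rw [hμchar n hn, hvolchar n hn]
    | zero => simp
    | add f g _ _ hf hg =>
      simp only [ContinuousMap.coe_add, Pi.add_apply]
      rw [integral_add (integrable_contMap μ f) (integrable_contMap μ g),
        integral_add (integrable_contMap volume f) (integrable_contMap volume g), hf, hg]
    | smul c f _ hf =>
      simp only [ContinuousMap.coe_smul, Pi.smul_apply]
      rw [integral_smul, integral_smul, hf]
  -- Urysohn function separating x₀ from K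
  obtain ⟨f₀, hf₀K, hf₀x₀, hf₀mem⟩ := exists_continuous_zero_one_of_isClosed
    hKclosed isClosed_singleton (disjoint_singleton_right.mpr hx₀)
  set g : C(𝕋d d, ℂ) := ⟨fun x => ((f₀ x : ℝ) : ℂ),
    Complex.continuous_ofReal.comp f₀.continuous⟩ with hgdef
  have hgμ : ∫ x, g x ∂μ = 0 := by
    rw [hInt g]
    have hzero : ∀ k : ↥K, g ↑k = 0 := by
      intro k
      have : f₀ ↑k = 0 := hf₀K k.2
      simp [hgdef, this]
    calc ∫ k : ↥K, g ↑k ∂μK = ∫ _ : ↥K, (0:ℂ) ∂μK := by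
          congr 1; funext k; exact hzero k
      _ = 0 := by simp
  set c := ∫ x, f₀ x ∂(volume : Measure (𝕋d d)) with hcdef
  have hc0 : 0 ≤ c := integral_nonneg (fun x => (hf₀mem x).1)
  have hcpos : 0 < c := by
    rcases hc0.lt_or_eq with hlt | heq
    · exact hlt
    · exfalso
      have hint : Integrable (fun x => f₀ x) (volume : Measure (𝕋d d)) :=
        integrable_contMapR _ f₀
      have hae := (integral_eq_zero_iff_of_nonneg (fun x => (hf₀mem x).1) hint).mp heq.symm
      have heq2 : (fun x => f₀ x) = (fun _ => (0:ℝ)) :=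
        (Continuous.ae_eq_iff_eq volume f₀.continuous continuous_const).mp hae
      have := congrFun heq2 x₀
      rw [hf₀x₀ rfl] at this
      norm_num at this
  have hgvol : ∫ x, g x ∂(volume : Measure (𝕋d d)) = (c : ℂ) := by
    rw [hgdef]
    exact integral_ofReal
  -- density of the span
  have hdense : Dense ((Submodule.span ℂ (range (charF (d := d))) : Submodule ℂ _) :
      Set C(𝕋d d, ℂ)) := by
    rw [dense_iff_closure_eq, ← Submodule.topologicalClosure_coe,
      span_charF_closure_eq_top d]
    rfl
  obtain ⟨p, hpball, hpspan⟩ := Metric.dense_iff.mp hdense g (c/3) (by positivity)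
  have hdist : ‖(g : C(𝕋d d, ℂ)) - p‖ < c/3 := by
    rw [← dist_eq_norm]
    rw [dist_comm]
    exact Metric.mem_ball.mp hpball
  have hboundμ : ∀ (ν : Measure (𝕋d d)) [IsProbabilityMeasure ν],
      ‖∫ x, g x ∂ν - ∫ x, p x ∂ν‖ ≤ c/3 := by
    intro ν hν
    rw [← integral_sub (integrable_contMap ν g) (integrable_contMap ν p)]
    have hb := norm_integral_le_of_norm_le_const (μ := ν)
      (f := fun x => g x - p x) (C := c/3) (Filter.Eventually.of_forall (fun x => by
        have h1 : ‖(g - p) x‖ ≤ ‖(g : C(𝕋d d, ℂ)) - p‖ := ContinuousMap.norm_coe_le_norm _ x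
        rw [ContinuousMap.sub_apply] at h1
        exact h1.trans hdist.le))
    simpa [measure_univ] using hb
  have hfinal : ‖(c : ℂ)‖ ≤ c/3 + c/3 := by
    have hps := hspan p hpspan
    have hrw : (c : ℂ) = (∫ x, g x ∂(volume : Measure (𝕋d d))
        - ∫ x, p x ∂(volume : Measure (𝕋d d)))
        + (∫ x, p x ∂μ - ∫ x, g x ∂μ) := by
      rw [hgvol, hgμ, hps]
      ring
    rw [hrw]
    refine (norm_add_le _ _).trans ?_
    have h2 : ‖∫ x, p x ∂μ - ∫ x, g x ∂μ‖ = ‖∫ x, g x ∂μ - ∫ x, p x ∂μ‖ := by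
      rw [← norm_neg]; congr 1; ring
    exact add_le_add (hboundμ volume) (by rw [h2]; exact hboundμ μ)
  rw [Complex.norm_real, Real.norm_eq_abs, abs_of_nonneg hc0] at hfinal
  linarith

end Stmt4Aux

/-- If `Θ ∈ M_d(ℝ)` is skew-symmetric and nondegenerate (`d ≥ 1`) and `m ≥ 1`
is an integer, then the image under `h_Θ` of the coset `mℤ^d + (1,…,1)` is dense in the
torus `(ℝ/ℤ)^d`, where `h_Θ(r)_j = Σ_k Θ_{jk} r_k mod 1`. -/
theorem stmt4 (d : ℕ) (hd : 1 ≤ d) (m : ℤ) (hm : 1 ≤ m)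
    (Θ : Matrix (Fin d) (Fin d) ℝ) (hskew : Θ.transpose = -Θ)
    (hnd : ∀ n : Fin d → ℤ, (∀ j : Fin d, ∃ z : ℤ, (∑ k, (n k : ℝ) * Θ k j) = (z : ℝ)) → n = 0) :
    Dense (Set.range (fun r : Fin d → ℤ => fun j : Fin d =>
      ((∑ k, Θ j k * ((m * r k + 1 : ℤ) : ℝ) : ℝ) : AddCircle (1 : ℝ)))) := by
  classical
  have hm0 : m ≠ 0 := by omega
  -- the homomorphism r ↦ (Θ (m r) mod 1)
  set ψ : (Fin d → ℤ) →+ Stmt4Aux.𝕋d d :=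
    { toFun := fun r => fun j =>
        (((∑ k, Θ j k * ((m * r k : ℤ) : ℝ)) : ℝ) : AddCircle (1:ℝ))
      map_zero' := by
        funext j
        norm_num
      map_add' := by
        intro r s
        funext j
        show (↑(∑ k, Θ j k * ((m * (r + s) k : ℤ) : ℝ)) : AddCircle (1:ℝ))
          = ↑(∑ k, Θ j k * ((m * r k : ℤ) : ℝ)) + ↑(∑ k, Θ j k * ((m * s k : ℤ) : ℝ))
        rw [← AddCircle.coe_add, ← Finset.sum_add_distrib]
        congr 1
        refine Finset.sum_congr rfl (fun k _ => ?_)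
        rw [Pi.add_apply]
        push_cast
        ring } with hψdef
  set c : Stmt4Aux.𝕋d d := fun j => (((∑ k, Θ j k : ℝ)) : AddCircle (1:ℝ)) with hcdef
  have key : ∀ r : Fin d → ℤ, (fun j : Fin d =>
      ((∑ k, Θ j k * ((m * r k + 1 : ℤ) : ℝ) : ℝ) : AddCircle (1 : ℝ))) = c + ψ r := by
    intro r
    funext j
    show _ = c j + ψ r j
    rw [hcdef]
    show (↑(∑ k, Θ j k * ((m * r k + 1 : ℤ) : ℝ)) : AddCircle (1:ℝ))
      = ↑(∑ k, Θ j k) + ↑(∑ k, Θ j k * ((m * r k : ℤ) : ℝ))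
    rw [← AddCircle.coe_add, ← Finset.sum_add_distrib]
    congr 1
    refine Finset.sum_congr rfl (fun k _ => ?_)
    push_cast
    ring
  have hrange : (Set.range (fun r : Fin d → ℤ => fun j : Fin d =>
      ((∑ k, Θ j k * ((m * r k + 1 : ℤ) : ℝ) : ℝ) : AddCircle (1 : ℝ))))
      = (Homeomorph.addLeft c) '' (ψ.range : Set (Stmt4Aux.𝕋d d)) := by
    ext x
    constructor
    · rintro ⟨r, rfl⟩
      exact ⟨ψ r, ⟨r, rfl⟩, by simpa using (key r).symm⟩
    · rintro ⟨-, ⟨r, rfl⟩, rfl⟩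
      exact ⟨r, by simpa using key r⟩
  -- density of the range of ψ via characters
  have hdense : Dense ((ψ.range : AddSubgroup (Stmt4Aux.𝕋d d)) : Set (Stmt4Aux.𝕋d d)) := by
    apply Stmt4Aux.dense_of_characters
    intro n hn
    by_contra hcon
    push_neg at hcon
    apply hn
    -- the character is trivial on the whole range of ψ
    have hcharψ : ∀ r : Fin d → ℤ, Stmt4Aux.charF n (ψ r) = Complex.exp
        (2 * Real.pi * Complex.I *
          ((∑ j, (n j : ℝ) * (∑ k, Θ j k * ((m * r k : ℤ) : ℝ)) : ℝ) : ℂ)) := by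
      intro r
      rw [Stmt4Aux.charF_apply]
      have hterm : ∀ j : Fin d, fourier (n j) (ψ r j)
          = Complex.exp (2 * Real.pi * Complex.I *
              (((n j : ℝ) * (∑ k, Θ j k * ((m * r k : ℤ) : ℝ)) : ℝ) : ℂ)) := by
        intro j
        show fourier (n j) ((((∑ k, Θ j k * ((m * r k : ℤ) : ℝ)) : ℝ) : AddCircle (1:ℝ))) = _
        rw [fourier_coe_apply]
        push_cast
        ring_nf
        congr 1; congr 1; congr 1
        exact Finset.sum_congr rfl (fun k _ => by ring)
      rw [Finset.prod_congr rfl (fun j _ => hterm j), ← Complex.exp_sum]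
      congr 1
      rw [← Finset.mul_sum]
      push_cast
      ring
    have hint : ∀ r : Fin d → ℤ, ∃ z : ℤ,
        (∑ j, (n j : ℝ) * (∑ k, Θ j k * ((m * r k : ℤ) : ℝ))) = (z : ℝ) := by
      intro r
      have h1 := hcon (ψ r) (AddMonoidHom.mem_range.mpr ⟨r, rfl⟩)
      rw [hcharψ r] at h1
      obtain ⟨z, hz⟩ := Complex.exp_eq_one_iff.mp h1
      refine ⟨z, ?_⟩
      have h2 : (2 * Real.pi * Complex.I) *
          ((∑ j, (n j : ℝ) * (∑ k, Θ j k * ((m * r k : ℤ) : ℝ)) : ℝ) : ℂ)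
          = (2 * Real.pi * Complex.I) * (z : ℂ) := by
        rw [hz]; push_cast; ring
      have h3 := mul_left_cancel₀ Complex.two_pi_I_ne_zero h2
      exact_mod_cast h3
    -- feed nondegeneracy with m • n
    have hmn := hnd (fun j => m * n j) ?_
    · funext j
      have hj := congrFun hmn j
      simp only [Pi.zero_apply] at hj
      rcases mul_eq_zero.mp hj with h | h
      · exact absurd h hm0
      · simpa using h
    · intro k0
      obtain ⟨z, hz⟩ := hint (Pi.single k0 1)
      refine ⟨z, ?_⟩
      rw [← hz]
      have hinner : ∀ j : Fin d,
          (∑ k, Θ j k * ((m * (Pi.single k0 1 : Fin d → ℤ) k : ℤ) : ℝ)) = Θ j k0 * (m : ℝ) := by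
        intro j
        rw [Finset.sum_eq_single k0]
        · simp
        · intro k _ hk
          simp [Pi.single_eq_of_ne hk]
        · simp
      refine Finset.sum_congr rfl (fun j _ => ?_)
      rw [hinner j]
      push_cast
      ring
  -- transfer density along the translation homeomorphism
  rw [hrange, dense_iff_closure_eq, ← Homeomorph.image_closure,
    dense_iff_closure_eq.mp hdense, image_univ]
  exact (Homeomorph.addLeft c).surjective.range_eq
end
end

section
/- Let d ∈ ℕ. Let Ω ⊆ (ℝ × ℝ)^{d+1} be the set of tuples ((s₀,t₀),…,(s_d,t_d)) such that 0 ≤ sⱼ ≤ 1 and 0 ≤ tⱼ ≤ 1 for all j, sⱼ·tⱼ = 0 for every j = 0,…,d, and Σⱼ (sⱼ + tⱼ) = 1, equipped with the subspace topology and the involution σ : Ω → Ω swapping sⱼ and tⱼ in every coordinate. Then there exists a homeomorphism φ from Ω onto the unit sphere S^d = { x ∈ ℝ^{d+1} : ‖x‖ = 1 } such that φ(σ(ω)) = −φ(ω) for every ω ∈ Ω. -/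
/-- The space `Ω ⊆ (ℝ × ℝ)^{d+1}` of tuples `((s₀,t₀),…,(s_d,t_d))` with
`0 ≤ sⱼ, tⱼ ≤ 1`, `sⱼ tⱼ = 0` for each `j`, and `Σⱼ (sⱼ + tⱼ) = 1`. -/
def stmt8Omega (d : ℕ) : Set (Fin (d + 1) → ℝ × ℝ) :=
  {ω | (∀ j, 0 ≤ (ω j).1 ∧ (ω j).1 ≤ 1 ∧ 0 ≤ (ω j).2 ∧ (ω j).2 ≤ 1 ∧ (ω j).1 * (ω j).2 = 0) ∧
    ∑ j, ((ω j).1 + (ω j).2) = 1}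

/-- The involution of `(ℝ × ℝ)^{d+1}` swapping `sⱼ` and `tⱼ` in every coordinate. -/
def stmt8Swap (d : ℕ) : (Fin (d + 1) → ℝ × ℝ) → (Fin (d + 1) → ℝ × ℝ) :=
  fun ω j => ((ω j).2, (ω j).1)

noncomputable section S8Aux

/-- `x_j = s_j - t_j`. -/
def s8toX (d : ℕ) (ω : Fin (d + 1) → ℝ × ℝ) : EuclideanSpace ℝ (Fin (d + 1)) :=
  WithLp.toLp 2 (fun j => (ω j).1 - (ω j).2)

/-- `s_j = x_j⁺`, `t_j = x_j⁻`. -/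
def s8fromX (d : ℕ) (x : EuclideanSpace ℝ (Fin (d + 1))) : Fin (d + 1) → ℝ × ℝ :=
  fun j => (max (x j) 0, max (-(x j)) 0)

lemma s8_sum_abs {d : ℕ} {ω : Fin (d + 1) → ℝ × ℝ} (hω : ω ∈ stmt8Omega d) :
    ∑ j, |s8toX d ω j| = 1 := by
  rw [← hω.2]
  refine Finset.sum_congr rfl fun j _ => ?_
  obtain ⟨h1, _, h3, _, h5⟩ := hω.1 j
  rcases mul_eq_zero.mp h5 with h | h
  · simp [s8toX, h, abs_of_nonneg h3]
  · simp [s8toX, h, abs_of_nonneg h1]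

lemma s8_toX_ne_zero {d : ℕ} {ω : Fin (d + 1) → ℝ × ℝ} (hω : ω ∈ stmt8Omega d) :
    s8toX d ω ≠ 0 := by
  intro h
  have := s8_sum_abs hω
  rw [h] at this
  simp at this

lemma s8_fromX_toX {d : ℕ} {ω : Fin (d + 1) → ℝ × ℝ} (hω : ω ∈ stmt8Omega d) :
    s8fromX d (s8toX d ω) = ω := by
  funext j
  obtain ⟨h1, _, h3, _, h5⟩ := hω.1 j
  have e1 : (s8fromX d (s8toX d ω) j).1 = (ω j).1 := by
    show max ((ω j).1 - (ω j).2) 0 = (ω j).1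
    rcases mul_eq_zero.mp h5 with h | h
    · rw [h, zero_sub, max_eq_right (neg_nonpos.mpr h3)]
    · rw [h, sub_zero, max_eq_left h1]
  have e2 : (s8fromX d (s8toX d ω) j).2 = (ω j).2 := by
    show max (-((ω j).1 - (ω j).2)) 0 = (ω j).2
    rcases mul_eq_zero.mp h5 with h | h
    · have hn : -((ω j).1 - (ω j).2) = (ω j).2 := by rw [h]; ring
      rw [hn, max_eq_left h3]
    · have hn : -((ω j).1 - (ω j).2) = -(ω j).1 := by rw [h]; ring
      rw [hn, max_eq_right (neg_nonpos.mpr h1), h]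
  exact Prod.ext e1 e2

lemma s8_toX_fromX {d : ℕ} (x : EuclideanSpace ℝ (Fin (d + 1))) :
    s8toX d (s8fromX d x) = x := by
  ext j
  show max (x j) 0 - max (-(x j)) 0 = x j
  rcases le_total 0 (x j) with h | h
  · rw [max_eq_left h, max_eq_right (neg_nonpos.mpr h)]; ring
  · rw [max_eq_right h, max_eq_left (neg_nonneg.mpr h)]; ring

lemma s8_fromX_mem {d : ℕ} (x : EuclideanSpace ℝ (Fin (d + 1))) (hx : ∑ j, |x j| = 1) :
    s8fromX d x ∈ stmt8Omega d := by
  have habs : ∀ j, |x j| ≤ 1 := by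
    intro j
    rw [← hx]
    exact Finset.single_le_sum (f := fun j => |x j|) (fun i _ => abs_nonneg _) (Finset.mem_univ j)
  constructor
  · intro j
    refine ⟨le_max_right _ _, ?_, le_max_right _ _, ?_, ?_⟩
    · exact max_le (le_trans (le_abs_self _) (habs j)) zero_le_one
    · exact max_le (le_trans (le_abs_self _) (by rw [abs_neg]; exact habs j)) zero_le_one
    · show max (x j) 0 * max (-(x j)) 0 = 0
      rcases le_total 0 (x j) with h | h
      · rw [max_eq_right (neg_nonpos.mpr h), mul_zero]
      · rw [max_eq_right h, zero_mul]
  · rw [← hx]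
    refine Finset.sum_congr rfl fun j _ => ?_
    show max (x j) 0 + max (-(x j)) 0 = |x j|
    rcases le_total 0 (x j) with h | h
    · rw [max_eq_left h, max_eq_right (neg_nonpos.mpr h), abs_of_nonneg h]; ring
    · rw [max_eq_right h, max_eq_left (neg_nonneg.mpr h), abs_of_nonpos h]; ring

lemma s8_sumabs_pos {d : ℕ} {y : EuclideanSpace ℝ (Fin (d + 1))} (hy : y ≠ 0) :
    0 < ∑ j, |y j| := by
  have h0 : 0 ≤ ∑ j, |y j| := Finset.sum_nonneg fun i _ => abs_nonneg _
  rcases h0.lt_or_eq with h | h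
  · exact h
  · exfalso
    apply hy
    ext j
    exact abs_eq_zero.mp
      ((Finset.sum_eq_zero_iff_of_nonneg fun i _ => abs_nonneg (y i)).mp h.symm j
        (Finset.mem_univ j))

/-- The forward map and inverse as an `Equiv`. -/
def s8equiv (d : ℕ) :
    (stmt8Omega d) ≃ (Metric.sphere (0 : EuclideanSpace ℝ (Fin (d + 1))) 1) where
  toFun ω := ⟨‖s8toX d ω.1‖⁻¹ • s8toX d ω.1, by
    have hne := s8_toX_ne_zero ω.2
    have hn : ‖s8toX d ω.1‖ ≠ 0 := norm_ne_zero_iff.mpr hne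
    rw [mem_sphere_zero_iff_norm, norm_smul, norm_inv, norm_norm]
    field_simp⟩
  invFun y := ⟨s8fromX d ((∑ j, |(y : EuclideanSpace ℝ (Fin (d + 1))) j|)⁻¹ •
      (y : EuclideanSpace ℝ (Fin (d + 1)))), by
    have hy : (y : EuclideanSpace ℝ (Fin (d + 1))) ≠ 0 := by
      intro h
      have := mem_sphere_zero_iff_norm.mp y.2
      rw [h] at this; simp at this
    have hS := s8_sumabs_pos hy
    apply s8_fromX_mem
    have : ∀ j, |((∑ j, |(y : EuclideanSpace ℝ (Fin (d + 1))) j|)⁻¹ •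
        (y : EuclideanSpace ℝ (Fin (d + 1)))) j|
        = (∑ j, |(y : EuclideanSpace ℝ (Fin (d + 1))) j|)⁻¹ *
          |(y : EuclideanSpace ℝ (Fin (d + 1))) j| := by
      intro j
      show |(∑ j, |(y : EuclideanSpace ℝ (Fin (d + 1))) j|)⁻¹ *
        (y : EuclideanSpace ℝ (Fin (d + 1))) j| = _
      rw [abs_mul, abs_of_nonneg (inv_nonneg.mpr hS.le)]
    rw [Finset.sum_congr rfl fun j _ => this j, ← Finset.mul_sum,
      inv_mul_cancel₀ hS.ne']⟩
  left_inv := by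
    rintro ⟨ω, hω⟩
    have hne := s8_toX_ne_zero hω
    have hn : (0:ℝ) < ‖s8toX d ω‖ := norm_pos_iff.mpr hne
    apply Subtype.ext
    show s8fromX d _ = ω
    have hsum : ∑ j, |(‖s8toX d ω‖⁻¹ • s8toX d ω) j| = ‖s8toX d ω‖⁻¹ := by
      have : ∀ j, |(‖s8toX d ω‖⁻¹ • s8toX d ω) j| = ‖s8toX d ω‖⁻¹ * |s8toX d ω j| := by
        intro j
        show |‖s8toX d ω‖⁻¹ * s8toX d ω j| = _
        rw [abs_mul, abs_of_nonneg (inv_nonneg.mpr hn.le)]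
      rw [Finset.sum_congr rfl fun j _ => this j, ← Finset.mul_sum, s8_sum_abs hω, mul_one]
    rw [hsum, inv_inv, smul_smul, mul_inv_cancel₀ hn.ne', one_smul, s8_fromX_toX hω]
  right_inv := by
    rintro ⟨y, hy⟩
    have hy1 : ‖y‖ = 1 := mem_sphere_zero_iff_norm.mp hy
    have hyne : y ≠ 0 := by intro h; rw [h] at hy1; simp at hy1
    have hS := s8_sumabs_pos hyne
    apply Subtype.ext
    show ‖s8toX d (s8fromX d _)‖⁻¹ • s8toX d (s8fromX d _) = y
    rw [s8_toX_fromX]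
    rw [norm_smul, norm_inv, Real.norm_eq_abs, abs_of_nonneg hS.le, hy1, mul_one,
      inv_inv, smul_smul, mul_inv_cancel₀ hS.ne', one_smul]

lemma s8_compact (d : ℕ) : IsCompact (stmt8Omega d) := by
  have hK : IsCompact (Set.univ.pi fun _ : Fin (d + 1) =>
      (Set.Icc (0:ℝ) 1 ×ˢ Set.Icc (0:ℝ) 1)) :=
    isCompact_univ_pi fun _ => isCompact_Icc.prod isCompact_Icc
  have hsub : stmt8Omega d ⊆ Set.univ.pi fun _ : Fin (d + 1) =>
      (Set.Icc (0:ℝ) 1 ×ˢ Set.Icc (0:ℝ) 1) := by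
    rintro ω ⟨h1, _⟩ j _
    obtain ⟨a, b, c, e, _⟩ := h1 j
    exact ⟨⟨a, b⟩, ⟨c, e⟩⟩
  have hclosed : IsClosed (stmt8Omega d) := by
    have c1 : ∀ j, Continuous fun ω : Fin (d + 1) → ℝ × ℝ => (ω j).1 :=
      fun j => continuous_fst.comp (continuous_apply j)
    have c2 : ∀ j, Continuous fun ω : Fin (d + 1) → ℝ × ℝ => (ω j).2 :=
      fun j => continuous_snd.comp (continuous_apply j)
    have : stmt8Omega d =
        (⋂ j, ({ω : Fin (d + 1) → ℝ × ℝ | 0 ≤ (ω j).1} ∩ {ω | (ω j).1 ≤ 1} ∩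
          {ω | 0 ≤ (ω j).2} ∩ {ω | (ω j).2 ≤ 1} ∩ {ω | (ω j).1 * (ω j).2 = 0})) ∩
        {ω : Fin (d + 1) → ℝ × ℝ | ∑ j, ((ω j).1 + (ω j).2) = 1} := by
      ext ω
      simp only [stmt8Omega, Set.mem_setOf_eq, Set.mem_inter_iff, Set.mem_iInter]
      constructor
      · rintro ⟨h1, h2⟩
        exact ⟨fun j => by obtain ⟨a, b, c, e, f⟩ := h1 j; exact ⟨⟨⟨⟨a, b⟩, c⟩, e⟩, f⟩, h2⟩
      · rintro ⟨h1, h2⟩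
        exact ⟨fun j => by obtain ⟨⟨⟨⟨a, b⟩, c⟩, e⟩, f⟩ := h1 j; exact ⟨a, b, c, e, f⟩, h2⟩
    rw [this]
    refine IsClosed.inter (isClosed_iInter fun j => ?_)
      (isClosed_eq (by continuity) continuous_const)
    exact ((((isClosed_le continuous_const (c1 j)).inter
      (isClosed_le (c1 j) continuous_const)).inter
      (isClosed_le continuous_const (c2 j))).inter
      (isClosed_le (c2 j) continuous_const)).inter
      (isClosed_eq ((c1 j).mul (c2 j)) continuous_const)
  exact hK.of_isClosed_subset hclosed hsub

lemma s8_cont (d : ℕ) : Continuous (s8equiv d) := by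
  have hX : Continuous fun ω : stmt8Omega d => s8toX d ω.1 := by
    have : Continuous fun ω : stmt8Omega d => fun j => ((ω.1 j).1 - (ω.1 j).2) :=
      continuous_pi fun j =>
        ((continuous_fst.comp ((continuous_apply j).comp continuous_subtype_val)).sub
          (continuous_snd.comp ((continuous_apply j).comp continuous_subtype_val)))
    exact (PiLp.continuous_toLp 2 fun _ : Fin (d + 1) => ℝ).comp this
  have hn : Continuous fun ω : stmt8Omega d => ‖s8toX d ω.1‖⁻¹ :=
    (hX.norm).inv₀ fun ω => norm_ne_zero_iff.mpr (s8_toX_ne_zero ω.2)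
  exact (hn.smul hX).subtype_mk _

/-- The involution `σ` preserves `Ω`, and `Ω` (with the subspace topology and
the involution `σ`) is equivariantly homeomorphic to the unit sphere `S^d ⊆ ℝ^{d+1}` with
the antipodal involution: there is a homeomorphism `φ : Ω ≃ S^d` with `φ(σ(ω)) = -φ(ω)`. -/
theorem stmt8 (d : ℕ) :
    (∀ ω ∈ stmt8Omega d, stmt8Swap d ω ∈ stmt8Omega d) ∧
    ∃ φ : (stmt8Omega d) ≃ₜ (Metric.sphere (0 : EuclideanSpace ℝ (Fin (d + 1))) 1),
      ∀ (ω : Fin (d + 1) → ℝ × ℝ) (hω : ω ∈ stmt8Omega d)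
        (hσω : stmt8Swap d ω ∈ stmt8Omega d),
        (φ ⟨stmt8Swap d ω, hσω⟩ : EuclideanSpace ℝ (Fin (d + 1))) =
          -(φ ⟨ω, hω⟩ : EuclideanSpace ℝ (Fin (d + 1))) := by
  constructor
  · rintro ω ⟨h1, h2⟩
    refine ⟨fun j => ?_, ?_⟩
    · obtain ⟨a, b, c, e, f⟩ := h1 j
      exact ⟨c, e, a, b, by rw [mul_comm]; exact f⟩
    · rw [← h2]
      exact Finset.sum_congr rfl fun j _ => add_comm _ _
  · haveI : CompactSpace (stmt8Omega d) := isCompact_iff_compactSpace.mp (s8_compact d)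
    refine ⟨(s8_cont d).homeoOfEquivCompactToT2, ?_⟩
    intro ω hω hσω
    have hneg : s8toX d (stmt8Swap d ω) = -s8toX d ω := by
      ext j
      show (ω j).2 - (ω j).1 = -((ω j).1 - (ω j).2)
      ring
    show ‖s8toX d (stmt8Swap d ω)‖⁻¹ • s8toX d (stmt8Swap d ω) =
      -(‖s8toX d ω‖⁻¹ • s8toX d ω)
    rw [hneg, norm_neg, smul_neg]

end S8Aux
end

section
/- Let G be a compact topological group, let A be a C*-algebra, and let α : G → Aut(A) be an action of G on A by *-automorphisms such that (g,a) ↦ α_g(a) is continuous. Then for every ε > 0 and every finite subset F ⊆ A there exists a positive contraction e ∈ A (0 ≤ e and ‖e‖ ≤ 1) such that sup_{g∈G} ‖α_g(e) − e‖ < ε, and for every a ∈ F one has ‖ea − ae‖ < ε, ‖ea − a‖ < ε, and ‖ae − a‖ < ε. -/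
open MeasureTheory Filter Topology

/-- For a continuous action `α` of a compact group `G` on a C*-algebra `A`,
for every `ε > 0` and finite `F ⊆ A` there is a positive contraction `e ∈ A` with
`sup_{g ∈ G} ‖α_g(e) − e‖ < ε` and `‖ea − ae‖ < ε`, `‖ea − a‖ < ε`, `‖ae − a‖ < ε`
for all `a ∈ F`. -/
theorem stmt9 {G : Type*} [Group G] [TopologicalSpace G] [IsTopologicalGroup G] [CompactSpace G]
    {A : Type*} [NonUnitalCStarAlgebra A] [PartialOrder A] [StarOrderedRing A]
    (α : G → (A ≃⋆ₐ[ℂ] A))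
    (hone : ∀ a : A, α 1 a = a)
    (hmul : ∀ (g h : G) (a : A), α (g * h) a = α g (α h a))
    (hcont : Continuous fun p : G × A => α p.1 p.2)
    (ε : ℝ) (hε : 0 < ε) (F : Finset A) :
    ∃ e : A, 0 ≤ e ∧ ‖e‖ ≤ 1 ∧ (⨆ g : G, ‖α g e - e‖) < ε ∧
      ∀ a ∈ F, ‖e * a - a * e‖ < ε ∧ ‖e * a - a‖ < ε ∧ ‖a * e - a‖ < ε := by
  classical
  have hδ9 : (0:ℝ) < ε / 9 := by positivity
  -- isometry of the automorphisms
  have hnorm : ∀ (g : G) (x : A), ‖α g x‖ = ‖x‖ := fun g x =>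
    NonUnitalStarAlgHom.norm_map (α g) (α g).injective x
  -- each automorphism fixes elements via inverse
  have hinvfix : ∀ (g : G) (a : A), α g (α g⁻¹ a) = a := fun g a => by
    rw [← hmul, mul_inv_cancel, hone]
  -- the compact orbit set
  set K : Set A := (fun p : G × A => α p.1 p.2) '' (Set.univ ×ˢ (F : Set A)) with hK
  have hKc : IsCompact K :=
    ((isCompact_univ.prod F.finite_toSet.isCompact).image hcont)
  obtain ⟨t, htf, htcov⟩ := Metric.totallyBounded_iff.mp hKc.totallyBounded (ε/9) hδ9
  -- pick an element of the approximate unit good on the finite net `t`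
  have hl := CStarAlgebra.increasingApproximateUnit A
  set l := CStarAlgebra.approximateUnit A with hldef
  have hev : ∀ᶠ x in l, (0 ≤ x ∧ ‖x‖ ≤ 1) ∧
      ∀ y ∈ t, ‖x * y - y‖ < ε/9 ∧ ‖y * x - y‖ < ε/9 := by
    refine (hl.eventually_nonneg.and hl.eventually_norm).and ?_
    rw [eventually_all_finite htf]
    intro y hy
    have h1 := (hl.tendsto_mul_right y).eventually (Metric.ball_mem_nhds y hδ9)
    have h2 := (hl.tendsto_mul_left y).eventually (Metric.ball_mem_nhds y hδ9)
    filter_upwards [h1, h2] with x hx1 hx2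
    rw [dist_eq_norm] at hx1 hx2
    exact ⟨hx1, hx2⟩
  haveI : l.NeBot := hl.neBot
  obtain ⟨e₀, ⟨he₀0, he₀1⟩, he₀t⟩ := hev.exists
  -- `e₀` is an approximate unit on all of `K`
  have he₀K : ∀ k ∈ K, ‖e₀ * k - k‖ < ε/3 ∧ ‖k * e₀ - k‖ < ε/3 := by
    intro k hk
    obtain ⟨y, hy, hky⟩ := Set.mem_iUnion₂.mp (htcov hk)
    rw [Metric.mem_ball, dist_eq_norm] at hky
    obtain ⟨h1, h2⟩ := he₀t y hy
    constructor
    · have hdecomp : e₀ * k - k = e₀ * (k - y) + (e₀ * y - y) + (y - k) := by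
        simp [mul_sub]
      calc ‖e₀ * k - k‖ ≤ ‖e₀ * (k - y)‖ + ‖e₀ * y - y‖ + ‖y - k‖ := by
            rw [hdecomp]; exact norm_add₃_le
        _ ≤ ‖e₀‖ * ‖k - y‖ + ‖e₀ * y - y‖ + ‖k - y‖ := by
            rw [norm_sub_rev y k]; gcongr; exact norm_mul_le _ _
        _ < ε/3 := by
            have h3 : ‖e₀‖ * ‖k - y‖ ≤ ‖k - y‖ := by
              simpa using mul_le_mul_of_nonneg_right he₀1 (norm_nonneg (k - y))
            linarith
    · have hdecomp : k * e₀ - k = (k - y) * e₀ + (y * e₀ - y) + (y - k) := by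
        simp [sub_mul]
      calc ‖k * e₀ - k‖ ≤ ‖(k - y) * e₀‖ + ‖y * e₀ - y‖ + ‖y - k‖ := by
            rw [hdecomp]; exact norm_add₃_le
        _ ≤ ‖k - y‖ * ‖e₀‖ + ‖y * e₀ - y‖ + ‖k - y‖ := by
            rw [norm_sub_rev y k]; gcongr; exact norm_mul_le _ _
        _ < ε/3 := by
            have h3 : ‖k - y‖ * ‖e₀‖ ≤ ‖k - y‖ := by
              simpa using mul_le_mul_of_nonneg_left he₀1 (norm_nonneg (k - y))
            linarith
  -- Haar measure on `G`
  borelize G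
  set K₀ : TopologicalSpace.PositiveCompacts G :=
    ⟨⟨Set.univ, isCompact_univ⟩, ⟨1, by simp⟩⟩ with hK₀
  set μ := MeasureTheory.Measure.haarMeasure K₀ with hμ
  haveI : IsProbabilityMeasure μ :=
    ⟨by exact MeasureTheory.Measure.haarMeasure_self (K₀ := K₀)⟩
  -- the integrand
  have hfc : Continuous fun g : G => α g e₀ :=
    hcont.comp (continuous_id.prodMk continuous_const)
  have hsm : StronglyMeasurable fun g : G => α g e₀ := by
    borelize A
    rw [stronglyMeasurable_iff_measurable_separable]
    exact ⟨hfc.measurable, (isCompact_range hfc).isSeparable⟩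
  have hInt : Integrable (fun g : G => α g e₀) μ := by
    refine ⟨hsm.aestronglyMeasurable, ?_⟩
    apply MeasureTheory.HasFiniteIntegral.of_bounded (C := 1)
    filter_upwards with g
    rw [hnorm]
    exact he₀1
  set e : A := ∫ g, α g e₀ ∂μ with he
  -- positivity
  have he0 : 0 ≤ e := by
    have hconv : Convex ℝ {x : A | 0 ≤ x} := fun x hx y hy a b ha hb _ =>
      add_nonneg (smul_nonneg ha hx) (smul_nonneg hb hy)
    have := hconv.integral_mem CStarAlgebra.isClosed_nonneg
      (Filter.Eventually.of_forall fun g => by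
        simpa using OrderHomClass.monotone (α g) he₀0) hInt
    exact this
  -- norm bound
  have he1 : ‖e‖ ≤ 1 := by
    have := norm_integral_le_of_norm_le_const (μ := μ) (C := 1)
      (f := fun g : G => α g e₀)
      (Filter.Eventually.of_forall fun g : G => by rw [hnorm]; exact he₀1)
    simpa using this
  -- invariance
  have hinv : ∀ h : G, α h e = e := by
    intro h
    have hL : Continuous fun a : A => α h a := hcont.comp (Continuous.prodMk_right h)
    let L : A →L[ℂ] A :=
      { toFun := fun a => α h a
        map_add' := map_add _
        map_smul' := map_smul _
        cont := hL }
    calc α h e = L e := rfl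
      _ = ∫ g, L (α g e₀) ∂μ := (L.integral_comp_comm hInt).symm
      _ = ∫ g, α (h * g) e₀ ∂μ := by
          refine integral_congr_ae (Filter.Eventually.of_forall fun g => ?_)
          simp only [L, ContinuousLinearMap.coe_mk', LinearMap.coe_mk, AddHom.coe_mk]
          rw [hmul]
      _ = ∫ g, α g e₀ ∂μ := MeasureTheory.integral_mul_left_eq_self (μ := μ) (fun g : G => α g e₀) h
      _ = e := rfl
  -- the sup is zero
  have hsup : (⨆ g : G, ‖α g e - e‖) < ε := by
    have h0 : (⨆ g : G, ‖α g e - e‖) = ⨆ _ : G, (0:ℝ) := by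
      congr 1; funext g; rw [hinv g, sub_self, norm_zero]
    rw [h0, ciSup_const]
    exact hε
  refine ⟨e, he0, he1, hsup, ?_⟩
  intro a ha
  -- pointwise bounds for the integrands
  have hbR : ∀ g : G, ‖α g e₀ * a - a‖ ≤ ε/3 := by
    intro g
    have hk : α g⁻¹ a ∈ K := ⟨(g⁻¹, a), ⟨Set.mem_univ _, ha⟩, rfl⟩
    have h1 := (he₀K _ hk).1
    have key : α g (e₀ * (α g⁻¹ a) - α g⁻¹ a) = α g e₀ * a - a := by
      rw [map_sub, map_mul, hinvfix]
    rw [← key, hnorm]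
    exact h1.le
  have hbL : ∀ g : G, ‖a * α g e₀ - a‖ ≤ ε/3 := by
    intro g
    have hk : α g⁻¹ a ∈ K := ⟨(g⁻¹, a), ⟨Set.mem_univ _, ha⟩, rfl⟩
    have h2 := (he₀K _ hk).2
    have key : α g ((α g⁻¹ a) * e₀ - α g⁻¹ a) = a * α g e₀ - a := by
      rw [map_sub, map_mul, hinvfix]
    rw [← key, hnorm]
    exact h2.le
  -- expressing e * a - a as an integral
  have hIntR : Integrable (fun g : G => α g e₀ * a) μ :=
    (((ContinuousLinearMap.mul ℂ A).flip a).integrable_comp hInt)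
  have hIntL : Integrable (fun g : G => a * α g e₀) μ :=
    ((ContinuousLinearMap.mul ℂ A a).integrable_comp hInt)
  have heaR : e * a - a = ∫ g, (α g e₀ * a - a) ∂μ := by
    rw [integral_sub hIntR (integrable_const a), integral_const, probReal_univ,
      one_smul]
    congr 1
    exact (((ContinuousLinearMap.mul ℂ A).flip a).integral_comp_comm hInt).symm
  have heaL : a * e - a = ∫ g, (a * α g e₀ - a) ∂μ := by
    rw [integral_sub hIntL (integrable_const a), integral_const, probReal_univ,
      one_smul]
    congr 1
    exact ((ContinuousLinearMap.mul ℂ A a).integral_comp_comm hInt).symm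
  have hR : ‖e * a - a‖ ≤ ε/3 := by
    rw [heaR]
    have := norm_integral_le_of_norm_le_const (μ := μ) (C := ε/3)
      (Filter.Eventually.of_forall fun g : G => hbR g)
    simpa using this
  have hL : ‖a * e - a‖ ≤ ε/3 := by
    rw [heaL]
    have := norm_integral_le_of_norm_le_const (μ := μ) (C := ε/3)
      (Filter.Eventually.of_forall fun g : G => hbL g)
    simpa using this
  have hcomm : ‖e * a - a * e‖ < ε := by
    have : e * a - a * e = (e * a - a) - (a * e - a) := by abel
    rw [this]
    calc ‖(e * a - a) - (a * e - a)‖ ≤ ‖e * a - a‖ + ‖a * e - a‖ := norm_sub_le _ _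
      _ ≤ ε/3 + ε/3 := add_le_add hR hL
      _ < ε := by linarith
  exact ⟨hcomm, lt_of_le_of_lt hR (by linarith), lt_of_le_of_lt hL (by linarith)⟩
end
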